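/- arXiv:2409.20183 — 4 statements merged into one kernel-verified Lean document; each statement's English description precedes it below -/
import Mathlib

section
/- Let G be a finite simple graph, r a positive integer, and S a multiset of vertices such that G ⋆^r S is valid (S is independent and r-incident in G). Then: (i) the multiset 2S (doubling every multiplicity) is independent and (r+1)-incident in G, and G ⋆^{r+1} (2S) = G ⋆^r S; (ii) if r > 1, then S is (r−1)-incident in G and G ⋆^{r−1} S = G. -/
open Classical Real Matrix

noncomputable section

variable {V : Type} [Fintype V] [DecidableEq V]

/-- The number of edges of `G` with both endpoints in `A`. -/
def edgeCount (G : SimpleGraph V) (A : Finset V) : ℕ :=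
  (Finset.univ.filter (fun p : V × V => G.Adj p.1 p.2 ∧ p.1 ∈ A ∧ p.2 ∈ A)).card / 2

/-- The graph state `|G⟩`, as a vector in `ℂ^(V → {0,1})`. -/
def graphState (G : SimpleGraph V) : (V → Bool) → ℂ :=
  fun x => (-1 : ℂ) ^ edgeCount G (Finset.univ.filter (fun v => x v = true)) /
    (Real.sqrt (2 ^ Fintype.card V) : ℂ)

/-- The odd neighbourhood `Odd_G(D)` of a set `D` of vertices. -/
def oddNbhd (G : SimpleGraph V) (D : Finset V) : Finset V :=
  Finset.univ.filter (fun v => Odd ((D.filter (fun u => G.Adj v u)).card))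

/-- The operator `X_A` flipping the coordinates in `A`. -/
def Xop (A : Finset V) (ψ : (V → Bool) → ℂ) : (V → Bool) → ℂ :=
  fun x => ψ (fun v => if v ∈ A then !(x v) else x v)

/-- The operator `Z_A`. -/
def Zop (A : Finset V) (ψ : (V → Bool) → ℂ) : (V → Bool) → ℂ :=
  fun x => (-1 : ℂ) ^ ((A.filter (fun v => x v = true)).card) * ψ x

/-- The Pauli operator `𝒫_D^G = (−1)^{|G[D]|} X_D Z_{Odd_G(D)}`. -/
def pauliP (G : SimpleGraph V) (D : Finset V) (ψ : (V → Bool) → ℂ) : (V → Bool) → ℂ :=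
  fun x => (-1 : ℂ) ^ edgeCount G D * Xop D (Zop (oddNbhd G D) ψ) x

/-- Index of a Bool in `Fin 2`. -/
def boolIdx (b : Bool) : Fin 2 := if b then 1 else 0

/-- Action of a local (tensor-product) operator `⊗_u U_u` on the state space. -/
def applyLocal (U : V → Matrix (Fin 2) (Fin 2) ℂ) (ψ : (V → Bool) → ℂ) : (V → Bool) → ℂ :=
  fun x => ∑ y : V → Bool, (∏ u, U u (boolIdx (x u)) (boolIdx (y u))) * ψ y

/-- A local unitary: each single-qubit factor is unitary. -/
def IsLocalUnitary (U : V → Matrix (Fin 2) (Fin 2) ℂ) : Prop :=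
  ∀ u, U u ∈ Matrix.unitaryGroup (Fin 2) ℂ

def Xgate : Matrix (Fin 2) (Fin 2) ℂ := !![0, 1; 1, 0]

def Zgate : Matrix (Fin 2) (Fin 2) ℂ := !![1, 0; 0, -1]

def Ygate : Matrix (Fin 2) (Fin 2) ℂ := Complex.I • (Xgate * Zgate)

def Hgate : Matrix (Fin 2) (Fin 2) ℂ := (1 / (Real.sqrt 2 : ℂ)) • !![1, 1; 1, -1]

/-- The rotation `Z(α) = diag(1, e^{iα})`. -/
def Zrot (α : ℝ) : Matrix (Fin 2) (Fin 2) ℂ := !![1, 0; 0, Complex.exp (Complex.I * (α : ℂ))]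

/-- The rotation `X(α) = H Z(α) H`. -/
def Xrot (α : ℝ) : Matrix (Fin 2) (Fin 2) ℂ := Hgate * Zrot α * Hgate

/-- A 2×2 matrix is in the Pauli group. -/
def IsPauliGate (M : Matrix (Fin 2) (Fin 2) ℂ) : Prop :=
  ∃ z ∈ ({1, -1, Complex.I, -Complex.I} : Set ℂ),
    ∃ P ∈ ({1, Xgate, Ygate, Zgate} : Set (Matrix (Fin 2) (Fin 2) ℂ)), M = z • P

/-- A 2×2 unitary is Clifford if it maps `X` and `Z` to the Pauli group under conjugation. -/
def IsCliffordGate (C : Matrix (Fin 2) (Fin 2) ℂ) : Prop :=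
  C ∈ Matrix.unitaryGroup (Fin 2) ℂ ∧ IsPauliGate (C * Xgate * Cᴴ) ∧ IsPauliGate (C * Zgate * Cᴴ)

/-- The subgroup `LC_r` of 2×2 unitaries generated by `H` and `Z(π/2^r)`. -/
inductive InLCr (r : ℕ) : Matrix (Fin 2) (Fin 2) ℂ → Prop
  | H : InLCr r Hgate
  | Z : InLCr r (Zrot (π / 2 ^ r))
  | one : InLCr r 1
  | mul {A B : Matrix (Fin 2) (Fin 2) ℂ} : InLCr r A → InLCr r B → InLCr r (A * B)
  | inv {A : Matrix (Fin 2) (Fin 2) ℂ} : InLCr r A → InLCr r A⁻¹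

/-- Two states are LU-equivalent when some local unitary maps one to the other. -/
def LUequiv (ψ φ : (V → Bool) → ℂ) : Prop :=
  ∃ U : V → Matrix (Fin 2) (Fin 2) ℂ, IsLocalUnitary U ∧ φ = applyLocal U ψ

/-- Two states are `LC_r`-equivalent when some local unitary with all factors in `LC_r`
maps one to the other. -/
def LCrEquiv (r : ℕ) (ψ φ : (V → Bool) → ℂ) : Prop :=
  ∃ U : V → Matrix (Fin 2) (Fin 2) ℂ, (∀ u, InLCr r (U u)) ∧ φ = applyLocal U ψ

/-- Local complementation of `G` at a vertex `u`: `v ∼ w` iff `(v ∼_G w) XOR (v, w ∈ N_G(u))`. -/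
def localComp (G : SimpleGraph V) (u : V) : SimpleGraph V where
  Adj v w := v ≠ w ∧ ¬ (G.Adj v w ↔ G.Adj u v ∧ G.Adj u w)
  symm := by
    constructor
    intro v w h
    obtain ⟨h1, h2⟩ := h
    refine ⟨h1.symm, fun h => h2 ?_⟩
    rw [G.adj_comm w v] at h
    tauto
  loopless := ⟨fun v h => h.1 rfl⟩

/-- Local equivalence: related by a sequence of local complementations. -/
def LocalEquiv : SimpleGraph V → SimpleGraph V → Prop :=
  Relation.ReflTransGen (fun G G' => ∃ u, G' = localComp G u)

/-- The local Clifford operator `L_u^G = X_u(π/2) ⊗_{v ∈ N_G(u)} Z_v(−π/2)`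
implementing the local complementation at `u`. -/
def Lmat (G : SimpleGraph V) (u : V) : V → Matrix (Fin 2) (Fin 2) ℂ :=
  fun v => if v = u then Xrot (π / 2) else if G.Adj u v then Zrot (-(π / 2)) else 1

/-- The local Clifford operator implementing a sequence of local complementations:
`lcSeqOp G [a₁, …, a_m] = L_{a_m}^{G^{(m−1)}} ⋯ L_{a_1}^{G^{(0)}}` (pointwise products). -/
def lcSeqOp : SimpleGraph V → List V → V → Matrix (Fin 2) (Fin 2) ℂ
  | _, [] => fun _ => 1
  | G, a :: l => fun v => lcSeqOp (localComp G a) l v * Lmat G a v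

/-- The support of a multiset of vertices. -/
def msSupp (S : V → ℕ) : Finset V := Finset.univ.filter (fun u => 0 < S u)

/-- A multiset of vertices is independent in `G` when its support is an independent set. -/
def MsIndep (G : SimpleGraph V) (S : V → ℕ) : Prop :=
  ∀ u v, 0 < S u → 0 < S v → ¬ G.Adj u v

/-- `S • A = Σ_{u ∈ A} S(u)`. -/
def msDot (S : V → ℕ) (A : Finset V) : ℕ := ∑ u ∈ A, S u

/-- The common neighbourhood `Λ_G^K = ⋂_{u ∈ K} N_G(u)`. -/
def commonNbhd (G : SimpleGraph V) (K : Finset V) : Finset V :=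
  Finset.univ.filter (fun v => ∀ u ∈ K, G.Adj u v)

/-- The Kronecker delta `δ(0) = 1`, `δ(k) = 0` for `k > 0`. -/
def kdelta (k : ℕ) : ℕ := if k = 0 then 1 else 0

/-- `S` is `r`-incident in `G`. -/
def RIncident (G : SimpleGraph V) (r : ℕ) (S : V → ℕ) : Prop :=
  ∀ k < r, ∀ K : Finset V, (∀ u ∈ K, u ∉ msSupp S) → K.card = k + 2 →
    2 ^ (r - k - kdelta k) ∣ msDot S (commonNbhd G K)

/-- The `r`-local complementation `G ⋆^r S`. -/
def rLocalComp (G : SimpleGraph V) (r : ℕ) (S : V → ℕ) : SimpleGraph V where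
  Adj u v := u ≠ v ∧
    ¬ (G.Adj u v ↔ msDot S (commonNbhd G {u, v}) ≡ 2 ^ (r - 1) [MOD 2 ^ r])
  symm := by
    constructor
    intro u v h
    obtain ⟨h1, h2⟩ := h
    refine ⟨h1.symm, fun h => h2 ?_⟩
    rw [G.adj_comm v u, Finset.pair_comm v u] at h
    exact h
  loopless := ⟨fun u h => h.1 rfl⟩

/-- `G ⋆^r S` is valid when `S` is independent and `r`-incident. -/
def ValidRLC (G : SimpleGraph V) (r : ℕ) (S : V → ℕ) : Prop :=
  MsIndep G S ∧ RIncident G r S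

/-- `r`-local equivalence: related by a sequence of valid `r`-local complementations. -/
def RLocalEquiv (r : ℕ) : SimpleGraph V → SimpleGraph V → Prop :=
  Relation.ReflTransGen (fun G G' => ∃ S : V → ℕ, ValidRLC G r S ∧ G' = rLocalComp G r S)

/-- A local set of `G`: a nonempty set of the form `D ∪ Odd_G(D)`. -/
def IsLocalSet (G : SimpleGraph V) (L : Finset V) : Prop :=
  L.Nonempty ∧ ∃ D : Finset V, L = D ∪ oddNbhd G D

/-- A minimal local set of `G`. -/
def IsMLS (G : SimpleGraph V) (L : Finset V) : Prop :=
  IsLocalSet G L ∧ ∀ L' : Finset V, IsLocalSet G L' → L' ⊆ L → L' = L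

/-- A vertex has type X in `G`. -/
def HasTypeX (G : SimpleGraph V) (u : V) : Prop :=
  (∃ L, IsMLS G L ∧ u ∈ L) ∧
  ∀ L D : Finset V, IsMLS G L → u ∈ L → L = D ∪ oddNbhd G D → u ∈ D ∧ u ∉ oddNbhd G D

/-- A vertex has type Y in `G`. -/
def HasTypeY (G : SimpleGraph V) (u : V) : Prop :=
  (∃ L, IsMLS G L ∧ u ∈ L) ∧
  ∀ L D : Finset V, IsMLS G L → u ∈ L → L = D ∪ oddNbhd G D → u ∈ D ∧ u ∈ oddNbhd G D

/-- A vertex has type Z in `G`. -/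
def HasTypeZ (G : SimpleGraph V) (u : V) : Prop :=
  (∃ L, IsMLS G L ∧ u ∈ L) ∧
  ∀ L D : Finset V, IsMLS G L → u ∈ L → L = D ∪ oddNbhd G D → u ∉ D ∧ u ∈ oddNbhd G D

/-- A vertex has type ⊥ in `G`. -/
def HasTypeBot (G : SimpleGraph V) (u : V) : Prop :=
  ¬ HasTypeX G u ∧ ¬ HasTypeY G u ∧ ¬ HasTypeZ G u

/-- A graph on a linearly ordered vertex set is in standard form. -/
def StandardForm {W : Type} [Fintype W] [LinearOrder W] (G : SimpleGraph W) : Prop :=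
  (∀ u, ¬ HasTypeY G u) ∧
  ∀ u, HasTypeX G u → ∀ v, G.Adj u v → HasTypeZ G v ∧ u < v

/-- The `k`-subsets of `[1, t]`. -/
abbrev KSubsets (t k : ℕ) := {A : Finset (Fin t) // A.card = k}

/-- The vertex set of the graphs `C_{t,k}` and `C'_{t,k}`. -/
abbrev CtkVertex (t k : ℕ) := Fin t ⊕ KSubsets t k

/-- The bipartite graph `C_{t,k}`: `u ∈ [1,t]` is adjacent to a `k`-subset `A` iff `u ∈ A`. -/
def Ctk (t k : ℕ) : SimpleGraph (CtkVertex t k) :=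
  SimpleGraph.fromRel (fun x y =>
    ∃ (u : Fin t) (A : KSubsets t k), x = Sum.inl u ∧ y = Sum.inr A ∧ u ∈ A.1)

/-- The graph `C'_{t,k}`: `C_{t,k}` together with all edges between distinct elements of `[1,t]`. -/
def Ctk' (t k : ℕ) : SimpleGraph (CtkVertex t k) :=
  SimpleGraph.fromRel (fun x y =>
    (∃ (u : Fin t) (A : KSubsets t k), x = Sum.inl u ∧ y = Sum.inr A ∧ u ∈ A.1) ∨
    (∃ u v : Fin t, x = Sum.inl u ∧ y = Sum.inl v))

end

lemma two_mul_modEq_aux (a b n : ℕ) : 2*a ≡ 2*b [MOD 2*n] ↔ a ≡ b [MOD n] := by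
  unfold Nat.ModEq
  rw [Nat.mul_mod_mul_left, Nat.mul_mod_mul_left]
  omega

lemma msDot_two_mul_aux {V : Type} [Fintype V] [DecidableEq V] (S : V → ℕ) (A : Finset V) :
    msDot (fun u => 2 * S u) A = 2 * msDot S A := by
  simp [msDot, Finset.mul_sum]

theorem stmt_2 {V : Type} [Fintype V] [DecidableEq V] (G : SimpleGraph V) (r : ℕ) (hr : 0 < r)
    (S : V → ℕ) (h : ValidRLC G r S) :
    (ValidRLC G (r + 1) (fun u => 2 * S u) ∧
      rLocalComp G (r + 1) (fun u => 2 * S u) = rLocalComp G r S) ∧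
    (1 < r → RIncident G (r - 1) S ∧ rLocalComp G (r - 1) S = G) := by
  obtain ⟨m, rfl⟩ : ∃ m, r = m + 1 := ⟨r - 1, (Nat.succ_pred_eq_of_pos hr).symm⟩
  obtain ⟨hindep, hinc⟩ := h
  constructor
  · constructor
    · constructor
      · intro u v hu hv
        simp only at hu hv
        exact hindep u v (by omega) (by omega)
      · intro k hk K hK hcard
        rw [msDot_two_mul_aux]
        have hsuppeq : ∀ u ∈ K, u ∉ msSupp S := by
          intro u hu
          have := hK u hu
          simp [msSupp] at this ⊢
          omega
        by_cases hkr : k < m + 1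
        · have hd := hinc k hkr K hsuppeq hcard
          have hδ : kdelta k ≤ 1 := by unfold kdelta; split <;> omega
          have hexp : m + 1 + 1 - k - kdelta k = (m + 1 - k - kdelta k) + 1 := by omega
          rw [hexp, pow_succ, mul_comm]
          exact mul_dvd_mul_left 2 hd
        · have hke : k = m + 1 := by omega
          have hδ : kdelta k = 0 := by unfold kdelta; split <;> omega
          have hexp : m + 1 + 1 - k - kdelta k = 1 := by omega
          rw [hexp, pow_one]
          exact Dvd.intro _ rfl
    · ext u v
      show (u ≠ v ∧ ¬ _) ↔ (u ≠ v ∧ ¬ _)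
      have key : (msDot (fun u => 2 * S u) (commonNbhd G {u, v}) ≡ 2 ^ (m + 1 + 1 - 1)
            [MOD 2 ^ (m + 1 + 1)]) ↔
          (msDot S (commonNbhd G {u, v}) ≡ 2 ^ (m + 1 - 1) [MOD 2 ^ (m + 1)]) := by
        rw [msDot_two_mul_aux]
        have e1 : (2:ℕ) ^ (m + 1 + 1 - 1) = 2 * 2 ^ (m + 1 - 1) := by
          simp [pow_succ]; ring
        have e2 : (2:ℕ) ^ (m + 1 + 1) = 2 * 2 ^ (m + 1) := by
          rw [pow_succ]; ring
        rw [e1, e2, two_mul_modEq_aux]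
      tauto
  · intro hr1
    have hm : 0 < m := by omega
    have key : ∀ u v : V, u ≠ v →
        ¬ (msDot S (commonNbhd G {u, v}) ≡ 2 ^ (m + 1 - 1 - 1) [MOD 2 ^ (m + 1 - 1)]) := by
      intro u v huv hmod
      have hdvd : 2 ^ m ∣ msDot S (commonNbhd G {u, v}) := by
        by_cases hu : 0 < S u ∨ 0 < S v
        · have hzero : msDot S (commonNbhd G {u, v}) = 0 := by
            apply Finset.sum_eq_zero
            intro w hw
            simp only [commonNbhd, Finset.mem_filter, Finset.mem_univ, true_and] at hw
            have hadju : G.Adj u w := hw u (by simp)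
            have hadjv : G.Adj v w := hw v (by simp)
            by_contra hSw
            rcases hu with hu | hu
            · exact hindep u w hu (by omega) hadju
            · exact hindep v w hu (by omega) hadjv
          rw [hzero]
          exact dvd_zero _
        · push_neg at hu
          have hK : ∀ x ∈ ({u, v} : Finset V), x ∉ msSupp S := by
            intro x hx
            simp only [Finset.mem_insert, Finset.mem_singleton] at hx
            simp [msSupp]
            rcases hx with rfl | rfl <;> omega
          have hcard : ({u, v} : Finset V).card = 0 + 2 := by
            rw [Finset.card_pair huv]
          have := hinc 0 (by omega) {u, v} hK hcard
          have hδ : kdelta 0 = 1 := rfl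
          have hexp : m + 1 - 0 - kdelta 0 = m := by omega
          rwa [hexp] at this
      unfold Nat.ModEq at hmod
      have hme : m + 1 - 1 = m := by omega
      rw [hme, Nat.mod_eq_zero_of_dvd hdvd] at hmod
      have h1 : (2:ℕ) ^ (m - 1) % 2 ^ m = 2 ^ (m - 1) := by
        apply Nat.mod_eq_of_lt
        exact Nat.pow_lt_pow_right (by omega) (by omega)
      rw [h1] at hmod
      exact absurd hmod.symm (pow_ne_zero _ (by omega))
    constructor
    · intro k hk K hK hcard
      have hd := hinc k (by omega) K hK hcard
      have hδ : kdelta k ≤ 1 := by unfold kdelta; split <;> omega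
      exact dvd_trans (pow_dvd_pow 2 (by omega)) hd
    · ext u v
      show (u ≠ v ∧ ¬ _) ↔ G.Adj u v
      constructor
      · rintro ⟨hne, h2⟩
        by_contra hA
        exact h2 ⟨fun hA' => absurd hA' hA, fun hQ => absurd hQ (key u v hne)⟩
      · intro hA
        exact ⟨hA.ne, fun hiff => key u v hA.ne (hiff.mp hA)⟩
end

section
/- Let G be a finite simple graph, r a positive integer, and S a multiset of vertices such that G ⋆^r S is valid. Then for every vertex u ∈ supp(S), the neighbourhood of u in G ⋆^r S equals its neighbourhood in G: N_{G ⋆^r S}(u) = N_G(u). -/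
open Classical Real Matrix

theorem stmt_3 {V : Type} [Fintype V] [DecidableEq V] (G : SimpleGraph V) (r : ℕ) (hr : 0 < r)
    (S : V → ℕ) (h : ValidRLC G r S) (u : V) (hu : u ∈ msSupp S) :
    (rLocalComp G r S).neighborSet u = G.neighborSet u := by
  ext v
  simp only [SimpleGraph.mem_neighborSet]
  have hSu : 0 < S u := by simpa [msSupp] using hu
  have hdot : msDot S (commonNbhd G {u, v}) = 0 := by
    apply Finset.sum_eq_zero
    intro w hw
    simp only [commonNbhd, Finset.mem_filter] at hw
    have hadj : G.Adj u w := hw.2 u (by simp)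
    by_contra h0
    exact h.1 u w hSu (Nat.pos_of_ne_zero h0) hadj
  have hmod : ¬ (msDot S (commonNbhd G {u, v}) ≡ 2 ^ (r - 1) [MOD 2 ^ r]) := by
    rw [hdot, Nat.ModEq, Nat.zero_mod,
      Nat.mod_eq_of_lt (Nat.pow_lt_pow_right one_lt_two (by omega))]
    exact fun hm => (Nat.pos_of_ne_zero (pow_ne_zero _ two_ne_zero)).ne hm
  constructor
  · rintro ⟨hne, hx⟩
    by_contra hG
    exact hx (iff_of_false hG hmod)
  · intro hG
    exact ⟨hG.ne, fun hi => hmod (hi.mp hG)⟩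
end

section
/- For any finite simple graph G = (V, E), any subset K ⊆ V, and any multiset S : V → ℕ of vertices, the following identity holds in ℤ: S • Odd_G(K) = Σ_{R ⊆ K, R ≠ ∅} (−2)^{|R|−1} · (S • Λ_G^R). -/
open Classical Real Matrix

lemma aux_g {V : Type} [DecidableEq V] (M : Finset V) :
    ∑ R ∈ M.powerset, (-2 : ℤ) ^ R.card = (-1 : ℤ) ^ M.card := by
  classical
  induction M using Finset.induction_on with
  | empty => simp
  | insert a M ha ih =>
    rw [Finset.sum_powerset_insert ha, ih, Finset.card_insert_of_notMem ha]
    have : ∀ R ∈ M.powerset, (-2 : ℤ) ^ (insert a R).card = -2 * (-2 : ℤ) ^ R.card := by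
      intro R hR
      rw [Finset.card_insert_of_notMem (fun h => ha (Finset.mem_powerset.mp hR h)),
        pow_succ, mul_comm]
    rw [Finset.sum_congr rfl this, ← Finset.mul_sum, ih, pow_succ]
    ring

lemma aux_f {V : Type} [DecidableEq V] (M : Finset V) :
    ∑ R ∈ M.powerset.filter (fun R => R.Nonempty), (-2 : ℤ) ^ (R.card - 1) =
      if Odd M.card then 1 else 0 := by
  classical
  rw [Finset.sum_filter]
  induction M using Finset.induction_on with
  | empty => simp
  | insert a M ha ih =>
    rw [Finset.sum_powerset_insert ha, ih, Finset.card_insert_of_notMem ha]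
    have h2 : ∀ R ∈ M.powerset,
        (if (insert a R).Nonempty then (-2 : ℤ) ^ ((insert a R).card - 1) else 0)
          = (-2 : ℤ) ^ R.card := by
      intro R hR
      rw [if_pos (Finset.insert_nonempty a R),
        Finset.card_insert_of_notMem (fun h => ha (Finset.mem_powerset.mp hR h))]
      simp
    rw [Finset.sum_congr rfl h2, aux_g]
    rcases Nat.even_or_odd M.card with h | h
    · rw [if_neg (by simp [Nat.odd_iff, Nat.even_iff] at h ⊢; omega),
        if_pos (by simp [Nat.odd_iff, Nat.even_iff] at h ⊢; omega), Even.neg_one_pow h]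
      ring
    · rw [if_pos h, if_neg (by simp [Nat.odd_iff, Nat.even_iff] at h ⊢; omega),
        Odd.neg_one_pow h]
      ring

theorem stmt_6 {V : Type} [Fintype V] [DecidableEq V] (G : SimpleGraph V) (K : Finset V)
    (S : V → ℕ) :
    (msDot S (oddNbhd G K) : ℤ) =
      ∑ R ∈ K.powerset.filter (fun R => R.Nonempty),
        (-2 : ℤ) ^ (R.card - 1) * (msDot S (commonNbhd G R) : ℤ) := by
  classical
  unfold msDot oddNbhd commonNbhd
  push_cast
  rw [Finset.sum_filter]
  have key : ∀ v : V, (if Odd ((K.filter (fun u => G.Adj v u)).card) then (S v : ℤ) else 0)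
      = ∑ R ∈ K.powerset.filter (fun R => R.Nonempty),
          (-2 : ℤ) ^ (R.card - 1) * (if ∀ u ∈ R, G.Adj u v then (S v : ℤ) else 0) := by
    intro v
    set M : Finset V := K.filter (fun u => G.Adj u v) with hM
    have hfilt : K.filter (fun u => G.Adj v u) = M := by
      apply Finset.filter_congr
      intro u _
      simp [G.adj_comm]
    rw [hfilt]
    have hset : K.powerset.filter (fun R => R.Nonempty ∧ ∀ u ∈ R, G.Adj u v)
        = M.powerset.filter (fun R => R.Nonempty) := by
      ext R
      simp only [Finset.mem_filter, Finset.mem_powerset, hM, Finset.subset_iff,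
        Finset.mem_filter]
      aesop
    calc (if Odd M.card then (S v : ℤ) else 0)
        = (∑ R ∈ M.powerset.filter (fun R => R.Nonempty), (-2 : ℤ) ^ (R.card - 1)) * S v := by
          rw [aux_f]; split <;> simp
      _ = ∑ R ∈ K.powerset.filter (fun R => R.Nonempty),
            (-2 : ℤ) ^ (R.card - 1) * (if ∀ u ∈ R, G.Adj u v then (S v : ℤ) else 0) := by
          symm
          simp_rw [mul_ite, mul_zero]
          rw [← Finset.sum_filter, Finset.filter_filter, hset, Finset.sum_mul]
  rw [Finset.sum_congr rfl (fun v _ => key v), Finset.sum_comm]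
  apply Finset.sum_congr rfl
  intro R _
  rw [Finset.mul_sum, Finset.sum_filter]
  simp_rw [mul_ite, mul_zero]
end

section
/- Let G and G' be finite simple graphs on the same vertex set V, and let U be a local unitary with |G⟩ = U |G'⟩. Let L ⊆ V be a set that is a minimal local set of G whose unique generator is D, and also a minimal local set of G' whose unique generator is D'. Then 𝒫_D^G U = U 𝒫_{D'}^{G'} as operators on ℂ^{(V → {0,1})}. -/
open Classical Real Matrix

-- ===================== auxiliary development =====================
open Finset
open scoped symmDiff
set_option linter.unusedSectionVars false
set_option linter.unnecessarySeqFocus false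

noncomputable section
variable {V : Type} [Fintype V] [DecidableEq V]


-- def boolIdx (b : Bool) : Fin 2 := if b then 1 else 0

def kron (f : V → Matrix (Fin 2) (Fin 2) ℂ) : Matrix (V → Bool) (V → Bool) ℂ :=
  Matrix.of fun x y => ∏ u, f u (boolIdx (x u)) (boolIdx (y u))

lemma kron_apply (f : V → Matrix (Fin 2) (Fin 2) ℂ) (x y : V → Bool) :
    kron f x y = ∏ u, f u (boolIdx (x u)) (boolIdx (y u)) := rfl

lemma sum_bool_eq_sum_idx (g : Fin 2 → ℂ) : ∑ b : Bool, g (boolIdx b) = ∑ i : Fin 2, g i := by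
  simp [Fintype.sum_bool, Fin.sum_univ_two, boolIdx]
  ring

lemma kron_mul (f g : V → Matrix (Fin 2) (Fin 2) ℂ) :
    kron f * kron g = kron (fun u => f u * g u) := by
  ext x y
  rw [Matrix.mul_apply]
  have key : ∀ z : V → Bool, kron f x z * kron g z y
      = ∏ u, (f u (boolIdx (x u)) (boolIdx (z u)) * g u (boolIdx (z u)) (boolIdx (y u))) := by
    intro z
    rw [kron_apply, kron_apply, ← Finset.prod_mul_distrib]
  simp only [key]
  have := Finset.prod_univ_sum (fun _ : V => (Finset.univ : Finset Bool))
    (fun u b => f u (boolIdx (x u)) (boolIdx b) * g u (boolIdx b) (boolIdx (y u)))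
  rw [Fintype.piFinset_univ] at this
  rw [← this, kron_apply]
  refine Finset.prod_congr rfl fun u _ => ?_
  rw [Matrix.mul_apply]
  exact sum_bool_eq_sum_idx (fun i => f u (boolIdx (x u)) i * g u i (boolIdx (y u)))

lemma boolIdx_inj : Function.Injective boolIdx := by
  intro a b; cases a <;> cases b <;> simp [boolIdx]

lemma kron_one : kron (fun _ : V => (1 : Matrix (Fin 2) (Fin 2) ℂ)) = 1 := by
  ext x y
  rw [kron_apply, Matrix.one_apply]
  by_cases h : x = y
  · subst h; simp [Matrix.one_apply]
  · have : ∃ u, x u ≠ y u := by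
      by_contra hc; push_neg at hc; exact h (funext hc)
    obtain ⟨u, hu⟩ := this
    rw [Finset.prod_eq_zero (Finset.mem_univ u), if_neg h]
    rw [Matrix.one_apply, if_neg (fun hh => hu (boolIdx_inj hh))]

lemma kron_conjTranspose (f : V → Matrix (Fin 2) (Fin 2) ℂ) :
    (kron f)ᴴ = kron (fun u => (f u)ᴴ) := by
  ext x y
  simp [kron_apply, Matrix.conjTranspose_apply, map_prod]

lemma kron_update_point (f : V → Matrix (Fin 2) (Fin 2) ℂ) (u : V)
    (m : Matrix (Fin 2) (Fin 2) ℂ) (x y : V → Bool) :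
    kron (Function.update f u m) x y
      = m (boolIdx (x u)) (boolIdx (y u)) * ∏ v ∈ univ \ {u}, f v (boolIdx (x v)) (boolIdx (y v)) := by
  rw [kron_apply]
  have : ∀ v, (Function.update f u m) v (boolIdx (x v)) (boolIdx (y v))
      = Function.update (fun v => f v (boolIdx (x v)) (boolIdx (y v))) u
          (m (boolIdx (x u)) (boolIdx (y u))) v := by
    intro v
    by_cases hv : v = u
    · subst hv; simp
    · simp [Function.update, hv]
  simp only [this]
  exact Finset.prod_update_of_mem (Finset.mem_univ u) _ _

lemma kron_update_add (f : V → Matrix (Fin 2) (Fin 2) ℂ) (u : V)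
    (m₁ m₂ : Matrix (Fin 2) (Fin 2) ℂ) :
    kron (Function.update f u (m₁ + m₂))
      = kron (Function.update f u m₁) + kron (Function.update f u m₂) := by
  ext x y
  simp [kron_update_point, Matrix.add_apply, add_mul]

lemma kron_update_smul (f : V → Matrix (Fin 2) (Fin 2) ℂ) (u : V) (c : ℂ)
    (m : Matrix (Fin 2) (Fin 2) ℂ) :
    kron (Function.update f u (c • m)) = c • kron (Function.update f u m) := by
  ext x y
  simp [kron_update_point, Matrix.smul_apply, smul_eq_mul]; ring

lemma kron_update_zero (f : V → Matrix (Fin 2) (Fin 2) ℂ) (u : V) :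
    kron (Function.update f u 0) = 0 := by
  ext x y
  simp [kron_update_point]

lemma kron_smul_pi (ε : V → ℂ) (f : V → Matrix (Fin 2) (Fin 2) ℂ) :
    kron (fun u => ε u • f u) = (∏ u, ε u) • kron f := by
  ext x y
  simp [kron_apply, Finset.prod_mul_distrib, Matrix.smul_apply, smul_eq_mul]

lemma trace_kron (f : V → Matrix (Fin 2) (Fin 2) ℂ) :
    (kron f).trace = ∏ u, (f u).trace := by
  have : ∀ u, (f u).trace = ∑ b : Bool, f u (boolIdx b) (boolIdx b) := by
    intro u; rw [sum_bool_eq_sum_idx (fun i => f u i i)]; rfl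
  simp only [this]
  have h2 := Finset.prod_univ_sum (fun _ : V => (Finset.univ : Finset Bool))
    (fun u b => f u (boolIdx b) (boolIdx b))
  rw [h2, Fintype.piFinset_univ]
  rfl


-- def Xgate : Matrix (Fin 2) (Fin 2) ℂ := !![0, 1; 1, 0]
-- -- -- def Zgate : Matrix (Fin 2) (Fin 2) ℂ := !![1, 0; 0, -1]

/-- `X^a` -/
def Xp (a : Bool) : Matrix (Fin 2) (Fin 2) ℂ := if a then Xgate else 1
/-- `Z^b` -/
def Zp (b : Bool) : Matrix (Fin 2) (Fin 2) ℂ := if b then Zgate else 1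
/-- the site Pauli `X^a Z^b` -/
def site (a b : Bool) : Matrix (Fin 2) (Fin 2) ℂ := Xp a * Zp b

lemma fin2cases (i : Fin 2) : i = 0 ∨ i = 1 := by omega

lemma site_mul (a b c d : Bool) :
    site a b * site c d = (if b && c then (-1 : ℂ) else 1) • site (xor a c) (xor b d) := by
  cases a <;> cases b <;> cases c <;> cases d <;>
    · ext i j
      rcases fin2cases i with hi | hi <;> rcases fin2cases j with hj | hj <;>
        subst hi <;> subst hj <;>
        simp [site, Xp, Zp, Xgate, Zgate, Matrix.mul_apply, Fin.sum_univ_two, Matrix.one_apply]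

lemma site_conjTranspose (a b : Bool) :
    (site a b)ᴴ = (if b && a then (-1 : ℂ) else 1) • site a b := by
  cases a <;> cases b <;>
    · ext i j
      rcases fin2cases i with hi | hi <;> rcases fin2cases j with hj | hj <;>
        subst hi <;> subst hj <;>
        simp [site, Xp, Zp, Xgate, Zgate, Matrix.mul_apply, Fin.sum_univ_two, Matrix.one_apply,
          Matrix.conjTranspose_apply]

lemma site_unitary (a b : Bool) : (site a b)ᴴ * site a b = 1 := by
  rw [site_conjTranspose, smul_mul_assoc, site_mul]
  cases a <;> cases b <;> simp [site, Xp, Zp]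

lemma site_trace (a b : Bool) : (site a b).trace = if a then 0 else if b then 0 else 2 := by
  cases a <;> cases b <;>
    simp [site, Xp, Zp, Xgate, Zgate, Matrix.trace, Matrix.mul_apply, Fin.sum_univ_two,
      Matrix.diag] <;> norm_num

/-- one-qubit Pauli twirl at `w = 1` -/
lemma site_twirl (m : Matrix (Fin 2) (Fin 2) ℂ) :
    ∑ a : Bool, ∑ b : Bool, site a b * m * (site a b)ᴴ = (2 * m.trace) • 1 := by
  ext i j
  rcases fin2cases i with hi | hi <;> rcases fin2cases j with hj | hj <;> subst hi <;> subst hj <;>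
    · simp [Fintype.sum_bool, site, Xp, Zp, Xgate, Zgate, Matrix.mul_apply, Fin.sum_univ_two,
        Matrix.one_apply, Matrix.conjTranspose_apply, Matrix.trace, Matrix.diag,
        Matrix.vecMul, dotProduct]
      try ring

/-- one-qubit twirl by conjugated Paulis, general unitary `w` -/
lemma site_twirl_conj (w : Matrix (Fin 2) (Fin 2) ℂ) (hw : w ∈ Matrix.unitaryGroup (Fin 2) ℂ)
    (m : Matrix (Fin 2) (Fin 2) ℂ) :
    ∑ a : Bool, ∑ b : Bool, (wᴴ * site a b * w) * m * (wᴴ * site a b * w)ᴴ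
      = (2 * m.trace) • 1 := by
  have hw1 : w * wᴴ = 1 := Matrix.mem_unitaryGroup_iff.mp hw
  have hw2 : wᴴ * w = 1 := Matrix.mem_unitaryGroup_iff'.mp hw
  have key : ∀ a b : Bool, (wᴴ * site a b * w) * m * (wᴴ * site a b * w)ᴴ
      = wᴴ * (site a b * (w * m * wᴴ) * (site a b)ᴴ) * w := by
    intro a b
    simp only [Matrix.conjTranspose_mul, Matrix.conjTranspose_conjTranspose]
    noncomm_ring
  simp only [key, ← Finset.mul_sum, ← Finset.sum_mul]
  rw [site_twirl (w * m * wᴴ)]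
  have ht : (w * m * wᴴ).trace = m.trace := by
    rw [Matrix.trace_mul_cycle, hw2, Matrix.one_mul]
  rw [ht]
  rw [Matrix.mul_smul, Matrix.smul_mul, Matrix.mul_one, hw2]


-- def edgeCount (G : SimpleGraph V) (A : Finset V) : ℕ :=
--   (Finset.univ.filter (fun p : V × V => G.Adj p.1 p.2 ∧ p.1 ∈ A ∧ p.2 ∈ A)).card / 2

-- def oddNbhd (G : SimpleGraph V) (D : Finset V) : Finset V :=
--   Finset.univ.filter (fun v => Odd ((D.filter (fun u => G.Adj v u)).card))

def dG (G : SimpleGraph V) (v : V) (A : Finset V) : ℕ := (A.filter (fun u => G.Adj v u)).card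

def qcG (G : SimpleGraph V) (A : Finset V) : ℕ :=
  (Finset.univ.filter (fun p : V × V => G.Adj p.1 p.2 ∧ p.1 ∈ A ∧ p.2 ∈ A)).card

lemma edgeCount_eq (G : SimpleGraph V) (A : Finset V) : edgeCount G A = qcG G A / 2 := rfl

lemma dG_sum (G : SimpleGraph V) (v : V) (A : Finset V) :
    dG G v A = ∑ w, if G.Adj v w ∧ w ∈ A then 1 else 0 := by
  rw [dG]
  have : A.filter (fun u => G.Adj v u) = univ.filter (fun w => G.Adj v w ∧ w ∈ A) := by
    ext w; simp [and_comm]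
  rw [this, Finset.card_filter]

lemma dG_sum' (G : SimpleGraph V) (v : V) (A : Finset V) :
    dG G v A = ∑ u, if G.Adj u v ∧ u ∈ A then 1 else 0 := by
  rw [dG_sum]
  refine Finset.sum_congr rfl fun u _ => ?_
  rw [G.adj_comm]

lemma qcG_insert (G : SimpleGraph V) (v : V) (A : Finset V) (hv : v ∉ A) :
    qcG G (insert v A) = qcG G A + 2 * dG G v A := by
  rw [qcG, qcG, Finset.card_filter, Finset.card_filter, Fintype.sum_prod_type,
    Fintype.sum_prod_type]
  have key : ∀ u w : V,
      (if G.Adj u w ∧ u ∈ insert v A ∧ w ∈ insert v A then (1:ℕ) else 0)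
      = (if G.Adj u w ∧ u ∈ A ∧ w ∈ A then 1 else 0)
        + (if u = v then (if G.Adj v w ∧ w ∈ A then 1 else 0) else 0)
        + (if w = v then (if G.Adj u v ∧ u ∈ A then 1 else 0) else 0) := by
    intro u w
    by_cases hu : u = v <;> by_cases hw : w = v
    · subst hu; subst hw; simp [hv]
    · subst hu; simp [hv, hw, Finset.mem_insert]
    · subst hw; simp [hv, hu, Finset.mem_insert]
    · simp [hu, hw, Finset.mem_insert]
  simp only [key, Finset.sum_add_distrib]
  have h2 : ∑ u : V, ∑ w : V, (if u = v then (if G.Adj v w ∧ w ∈ A then (1:ℕ) else 0) else 0)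
      = dG G v A := by
    have hin : ∀ u : V, (∑ w : V, if u = v then (if G.Adj v w ∧ w ∈ A then (1:ℕ) else 0) else 0)
        = if u = v then dG G v A else 0 := by
      intro u; by_cases hu : u = v <;> simp [hu, dG_sum]
    simp only [hin]
    rw [Finset.sum_ite_eq' univ v (fun _ => dG G v A)]
    simp
  have h3 : ∑ u : V, ∑ w : V, (if w = v then (if G.Adj u v ∧ u ∈ A then (1:ℕ) else 0) else 0)
      = dG G v A := by
    have : ∀ u : V, ∑ w : V, (if w = v then (if G.Adj u v ∧ u ∈ A then (1:ℕ) else 0) else 0)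
        = if G.Adj u v ∧ u ∈ A then 1 else 0 := fun u =>
      by rw [Finset.sum_ite_eq' univ v (fun _ => if G.Adj u v ∧ u ∈ A then (1:ℕ) else 0)]; simp
    simp only [this]
    rw [← dG_sum']
  rw [h2, h3]
  ring

lemma qcG_empty (G : SimpleGraph V) : qcG G ∅ = 0 := by
  rw [qcG]
  convert Finset.card_empty
  ext p; simp

lemma qcG_even (G : SimpleGraph V) (A : Finset V) : Even (qcG G A) := by
  induction A using Finset.induction_on with
  | empty => simp [qcG_empty]
  | @insert v A hv ih =>
    rw [qcG_insert G v A hv]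
    rcases ih with ⟨k, hk⟩
    exact ⟨k + dG G v A, by omega⟩

lemma edgeCount_insert (G : SimpleGraph V) (v : V) (A : Finset V) (hv : v ∉ A) :
    edgeCount G (insert v A) = edgeCount G A + dG G v A := by
  have h1 := qcG_insert G v A hv
  have h2 := qcG_even G A
  rw [edgeCount_eq, edgeCount_eq]
  omega

lemma edgeCount_empty (G : SimpleGraph V) : edgeCount G (∅ : Finset V) = 0 := by
  rw [edgeCount_eq, qcG_empty]

lemma mem_oddNbhd (G : SimpleGraph V) (E : Finset V) (v : V) :
    v ∈ oddNbhd G E ↔ Odd (dG G v E) := by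
  simp [oddNbhd, dG]

lemma oddNbhd_empty (G : SimpleGraph V) : oddNbhd G (∅ : Finset V) = ∅ := by
  ext v; simp [oddNbhd]

lemma natCast_zmod2 (n : ℕ) : (n : ZMod 2) = if Even n then 0 else 1 := by
  have h2 : (2 : ZMod 2) = 0 := rfl
  rcases Nat.even_or_odd n with h | h
  · rw [if_pos h]
    obtain ⟨k, hk⟩ := h; subst hk; push_cast
    calc (k : ZMod 2) + k = 2 * k := by ring
    _ = 0 := by rw [h2]; ring
  · rw [if_neg (by simpa [Nat.not_even_iff_odd] using h)]
    obtain ⟨k, hk⟩ := h; subst hk; push_cast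
    calc (2 : ZMod 2) * k + 1 = 2 * k + 1 := by ring
    _ = 1 := by rw [h2]; ring

lemma dG_symmDiff (G : SimpleGraph V) (v : V) (A B : Finset V) :
    ((dG G v (A ∆ B) : ZMod 2)) = dG G v A + dG G v B := by
  have hf : (A ∆ B).filter (fun u => G.Adj v u)
      = (A.filter (fun u => G.Adj v u)) ∆ (B.filter (fun u => G.Adj v u)) := by
    ext u; simp [Finset.mem_symmDiff]; tauto
  have hcard : ∀ s t : Finset V, (s ∆ t).card + 2 * (s ∩ t).card = s.card + t.card := by
    intro s t
    have h1 : s ∆ t = (s \ t) ∪ (t \ s) := by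
      ext a; simp [Finset.mem_symmDiff, Finset.mem_union, Finset.mem_sdiff]
    have hd : Disjoint (s \ t) (t \ s) := by
      rw [Finset.disjoint_left]; intro a ha hb
      simp only [Finset.mem_sdiff] at ha hb; exact hb.2 ha.1
    have h2 : (s ∆ t).card = (s \ t).card + (t \ s).card := by
      rw [h1, Finset.card_union_of_disjoint hd]
    have h3 : (s \ t).card + (s ∩ t).card = s.card := Finset.card_sdiff_add_card_inter s t
    have h4 : (t \ s).card + (t ∩ s).card = t.card := Finset.card_sdiff_add_card_inter t s
    have h5 : (t ∩ s).card = (s ∩ t).card := by rw [Finset.inter_comm]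
    omega
  have := hcard (A.filter (fun u => G.Adj v u)) (B.filter (fun u => G.Adj v u))
  rw [dG, dG, dG, hf]
  have hcast := congrArg (fun n : ℕ => (n : ZMod 2)) this
  push_cast at hcast
  have h20 : (2 : ZMod 2) = 0 := rfl
  rw [h20, zero_mul, add_zero] at hcast
  exact hcast

lemma neg_one_pow_congr' (a b : ℕ) (h : (a : ZMod 2) = (b : ZMod 2)) :
    ((-1 : ℂ)) ^ a = (-1) ^ b := by
  rw [ZMod.natCast_eq_natCast_iff'] at h
  conv_lhs => rw [← Nat.div_add_mod a 2]
  conv_rhs => rw [← Nat.div_add_mod b 2]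
  rw [pow_add, pow_add, pow_mul, pow_mul]
  norm_num [h]

lemma dG_empty (G : SimpleGraph V) (v : V) : dG G v (∅ : Finset V) = 0 := by simp [dG]

lemma symmDiff_singleton_not_mem {C : Finset V} {v : V} (h : v ∉ C) : C ∆ {v} = insert v C := by
  ext a; simp [Finset.mem_symmDiff]
  constructor
  · rintro (⟨h1, h2⟩ | ⟨h1, h2⟩) <;> tauto
  · rintro (rfl | h1)
    · right; exact ⟨rfl, h⟩
    · left; exact ⟨h1, fun hh => h (hh ▸ h1)⟩

lemma symmDiff_singleton_mem {C : Finset V} {v : V} (h : v ∈ C) : C ∆ {v} = C.erase v := by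
  ext a; simp [Finset.mem_symmDiff, Finset.mem_erase]
  constructor
  · rintro (⟨h1, h2⟩ | ⟨rfl, h2⟩) <;> tauto
  · rintro ⟨h1, h2⟩; exact Or.inl ⟨h2, h1⟩

lemma dG_erase (G : SimpleGraph V) (v : V) (C : Finset V) :
    dG G v (C.erase v) = dG G v C := by
  rw [dG, dG, Finset.filter_erase, Finset.erase_eq_of_notMem]
  intro hc
  exact G.loopless.irrefl v (Finset.mem_filter.mp hc).2

lemma ec_flip (G : SimpleGraph V) (C : Finset V) (v : V) :
    ((edgeCount G (C ∆ {v}) : ZMod 2)) = edgeCount G C + dG G v C := by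
  have h20 : (2 : ZMod 2) = 0 := rfl
  by_cases h : v ∈ C
  · rw [symmDiff_singleton_mem h]
    have h1 : C = insert v (C.erase v) := (Finset.insert_erase h).symm
    have h2 : edgeCount G C = edgeCount G (C.erase v) + dG G v (C.erase v) := by
      conv_lhs => rw [h1]
      exact edgeCount_insert G v _ (Finset.notMem_erase v C)
    rw [dG_erase] at h2
    have hcast := congrArg (fun n : ℕ => (n : ZMod 2)) h2
    push_cast at hcast
    have hdd : ((dG G v C : ZMod 2)) + (dG G v C : ZMod 2) = 0 := by
      calc ((dG G v C : ZMod 2)) + (dG G v C : ZMod 2) = 2 * (dG G v C : ZMod 2) := by ring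
      _ = 0 := by rw [h20]; ring
    linear_combination - hcast - hdd
  · rw [symmDiff_singleton_not_mem h, edgeCount_insert G v C h]
    push_cast; ring

lemma dG_insert_right (G : SimpleGraph V) (u v : V) (B : Finset V) (hv : v ∉ B) :
    dG G u (insert v B) = dG G u B + (if G.Adj u v then 1 else 0) := by
  rw [dG, dG, Finset.filter_insert]
  by_cases h : G.Adj u v
  · rw [if_pos h, if_pos h, Finset.card_insert_of_notMem (fun hc => hv (Finset.mem_of_mem_filter v hc))]
  · rw [if_neg h, if_neg h, add_zero]

lemma card_filter_adj_comm (G : SimpleGraph V) (v : V) (A : Finset V) :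
    (A.filter (fun u => G.Adj u v)).card = dG G v A := by
  rw [dG]
  congr 1
  apply Finset.filter_congr
  intro u _
  simp [G.adj_comm]

lemma Qlin (G : SimpleGraph V) (B A : Finset V) :
    ((edgeCount G (A ∆ B) : ZMod 2))
      = edgeCount G A + edgeCount G B + ∑ u ∈ A, (dG G u B : ZMod 2) := by
  induction B using Finset.induction_on with
  | empty =>
    have : A ∆ (∅ : Finset V) = A := by simp
    rw [this, edgeCount_empty]
    simp [dG_empty]
  | @insert v B hv ih =>
    have h1 : insert v B = B ∆ {v} := (symmDiff_singleton_not_mem hv).symm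
    have h2 : A ∆ insert v B = (A ∆ B) ∆ {v} := by rw [h1, ← symmDiff_assoc]
    rw [h2, ec_flip, ih, dG_symmDiff]
    have h3 : ((edgeCount G (insert v B) : ZMod 2)) = edgeCount G B + dG G v B := by
      rw [h1]; exact ec_flip G B v
    rw [h3]
    have h4 : ∀ u ∈ A, ((dG G u (insert v B) : ZMod 2))
        = (dG G u B : ZMod 2) + (if G.Adj u v then 1 else 0) := by
      intro u _
      rw [dG_insert_right G u v B hv]
      push_cast
      by_cases h : G.Adj u v <;> simp [h]
    rw [Finset.sum_congr rfl h4, Finset.sum_add_distrib]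
    have h5 : ∑ u ∈ A, (if G.Adj u v then (1 : ZMod 2) else 0) = ((dG G v A : ZMod 2)) := by
      rw [← card_filter_adj_comm G v A, Finset.card_filter]
      push_cast
      rfl
    rw [h5]
    ring

lemma odd_card_parity (G : SimpleGraph V) (E Y : Finset V) :
    ((((oddNbhd G E).filter (fun v => v ∈ Y)).card : ZMod 2)) = ∑ u ∈ Y, (dG G u E : ZMod 2) := by
  have h1 : (oddNbhd G E).filter (fun v => v ∈ Y) = Y.filter (fun v => v ∈ oddNbhd G E) := by
    ext v; simp [Finset.mem_filter, and_comm]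
  rw [h1, Finset.card_filter]
  push_cast
  refine Finset.sum_congr rfl fun u _ => ?_
  by_cases h : Odd (dG G u E)
  · rw [if_pos ((mem_oddNbhd G E u).mpr h), natCast_zmod2,
      if_neg (by simpa [Nat.not_even_iff_odd] using h)]
  · rw [if_neg (fun hc => h ((mem_oddNbhd G E u).mp hc)), natCast_zmod2,
      if_pos (Nat.not_odd_iff_even.mp h)]

lemma stab_sign (G : SimpleGraph V) (E Y : Finset V) :
    ((-1 : ℂ)) ^ (edgeCount G (Y ∆ E))
      = (-1) ^ (edgeCount G Y) * (-1) ^ (edgeCount G E)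
        * (-1) ^ (((oddNbhd G E).filter (fun v => v ∈ Y)).card) := by
  rw [← pow_add, ← pow_add]
  apply neg_one_pow_congr'
  push_cast
  rw [Qlin G E Y, odd_card_parity]

def fsx (x : V → Bool) : Finset V := Finset.univ.filter (fun v => x v = true)

def flipE (E : Finset V) (x : V → Bool) : V → Bool := fun v => if v ∈ E then !(x v) else x v

lemma fs_flip (E : Finset V) (x : V → Bool) : fsx (flipE E x) = fsx x ∆ E := by
  ext v
  by_cases h : v ∈ E <;> cases hx : x v <;>
    simp [fsx, flipE, Finset.mem_symmDiff, h, hx]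

lemma flip_flip' (E : Finset V) (x : V → Bool) : flipE E (flipE E x) = x := by
  funext v
  by_cases h : v ∈ E <;> simp [flipE, h]


/-- the site matrices of the Pauli operator `P_E^G` (without phase) -/
def pmat (G : SimpleGraph V) (E : Finset V) : V → Matrix (Fin 2) (Fin 2) ℂ :=
  fun u => site (decide (u ∈ E)) (decide (u ∈ oddNbhd G E))

/-- the Pauli operator `P_E^G` as a matrix -/
def PEm (G : SimpleGraph V) (E : Finset V) : Matrix (V → Bool) (V → Bool) ℂ :=
  ((-1 : ℂ) ^ (edgeCount G E)) • kron (pmat G E)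

lemma site_apply (a b i j : Bool) :
    site a b (boolIdx i) (boolIdx j)
      = if j = xor i a then (if b && j then (-1 : ℂ) else 1) else 0 := by
  cases a <;> cases b <;> cases i <;> cases j <;>
    simp [site, Xp, Zp, Xgate, Zgate, boolIdx, Matrix.mul_apply, Fin.sum_univ_two,
      Matrix.one_apply]

lemma prod_ite_neg_one (P : V → Prop) :
    (∏ u, (if P u then (-1 : ℂ) else 1)) = (-1) ^ (Finset.univ.filter P).card := by
  rw [Finset.prod_ite, Finset.prod_const, Finset.prod_const, one_pow, mul_one]

lemma flipE_eq_xor (E : Finset V) (x : V → Bool) (u : V) :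
    flipE E x u = xor (x u) (decide (u ∈ E)) := by
  by_cases h : u ∈ E <;> simp [flipE, h]

lemma kron_pmat_apply (G : SimpleGraph V) (E : Finset V) (x y : V → Bool) :
    kron (pmat G E) x y
      = if y = flipE E x
          then (-1 : ℂ) ^ (((oddNbhd G E).filter (fun v => y v = true)).card) else 0 := by
  rw [kron_apply]
  by_cases hy : y = flipE E x
  · rw [if_pos hy]
    have hfac : ∀ u, pmat G E u (boolIdx (x u)) (boolIdx (y u))
        = if u ∈ (oddNbhd G E).filter (fun v => y v = true) then (-1 : ℂ) else 1 := by
      intro u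
      rw [pmat, site_apply]
      have hcond : y u = xor (x u) (decide (u ∈ E)) := by rw [hy, flipE_eq_xor]
      rw [if_pos hcond]
      by_cases h1 : u ∈ oddNbhd G E <;> cases h2 : y u <;>
        simp [h1, h2, Finset.mem_filter]
    simp only [hfac]
    rw [Finset.prod_ite_mem, Finset.univ_inter, Finset.prod_const]
  · rw [if_neg hy]
    have : ∃ u, y u ≠ flipE E x u := by
      by_contra hc; push_neg at hc; exact hy (funext hc)
    obtain ⟨u, hu⟩ := this
    refine Finset.prod_eq_zero (Finset.mem_univ u) ?_
    rw [pmat, site_apply, if_neg]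
    rw [flipE_eq_xor] at hu
    intro hc
    exact hu (by cases hcc : y u <;> cases hxx : x u <;> cases hee : decide (u ∈ E) <;>
      simp_all)

lemma applyLocal_eq (U : V → Matrix (Fin 2) (Fin 2) ℂ) (ψ : (V → Bool) → ℂ) :
    applyLocal U ψ = (kron U).mulVec ψ := rfl

lemma mulVec_single_support (M : Matrix (V → Bool) (V → Bool) ℂ) (ψ : (V → Bool) → ℂ)
    (x x' : V → Bool) (c : ℂ) (hM : ∀ y, M x y = if y = x' then c else 0) :
    M.mulVec ψ x = c * ψ x' := by
  unfold Matrix.mulVec dotProduct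
  simp only [hM]
  rw [Finset.sum_eq_single x']
  · rw [if_pos rfl]
  · intro b _ hb; rw [if_neg hb, zero_mul]
  · intro hx; exact absurd (Finset.mem_univ x') hx

lemma pauliP_eq (G : SimpleGraph V) (D : Finset V) (ψ : (V → Bool) → ℂ) :
    pauliP G D ψ = (PEm G D).mulVec ψ := by
  funext x
  rw [PEm, Matrix.smul_mulVec, Pi.smul_apply, smul_eq_mul]
  rw [mulVec_single_support (kron (pmat G D)) ψ x (flipE D x)
    ((-1 : ℂ) ^ (((oddNbhd G D).filter (fun v => flipE D x v = true)).card))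
    (fun y => by rw [kron_pmat_apply]; by_cases h : y = flipE D x <;> simp [h])]
  rw [pauliP, Xop, Zop]
  rfl

lemma graphState_apply (G : SimpleGraph V) (x : V → Bool) :
    graphState G x = (-1 : ℂ) ^ (edgeCount G (fsx x)) / (Real.sqrt (2 ^ Fintype.card V) : ℂ) :=
  rfl

lemma PE_mulVec_g (G : SimpleGraph V) (E : Finset V) :
    (PEm G E).mulVec (graphState G) = graphState G := by
  funext x
  rw [PEm, Matrix.smul_mulVec, Pi.smul_apply, smul_eq_mul]
  rw [mulVec_single_support (kron (pmat G E)) (graphState G) x (flipE E x)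
    ((-1 : ℂ) ^ (((oddNbhd G E).filter (fun v => flipE E x v = true)).card))
    (fun y => by rw [kron_pmat_apply]; by_cases h : y = flipE E x <;> simp [h])]
  have hfilter : ((oddNbhd G E).filter (fun v => flipE E x v = true)).card
      = ((oddNbhd G E).filter (fun v => v ∈ fsx (flipE E x))).card := by
    congr 1; apply Finset.filter_congr; intro v _; simp [fsx]
  have hY : fsx (flipE E x) ∆ E = fsx x := by
    rw [fs_flip]; exact symmDiff_symmDiff_cancel_right E (fsx x)
  have hsign := stab_sign G E (fsx (flipE E x))
  rw [hY] at hsign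
  rw [graphState_apply G (flipE E x), graphState_apply G x, hsign, hfilter]
  ring

lemma graphState_ne_zero (G : SimpleGraph V) (x : V → Bool) : graphState G x ≠ 0 := by
  rw [graphState_apply]
  apply div_ne_zero
  · exact pow_ne_zero _ (by norm_num)
  · simp only [ne_eq, Complex.ofReal_eq_zero]
    positivity

lemma decide_xor_symmDiff (E F : Finset V) (u : V) :
    xor (decide (u ∈ E)) (decide (u ∈ F)) = decide (u ∈ E ∆ F) := by
  by_cases h1 : u ∈ E <;> by_cases h2 : u ∈ F <;>
    simp [h1, h2, Finset.mem_symmDiff]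

lemma odd_iff_cast (n : ℕ) : Odd n ↔ (n : ZMod 2) = 1 := by
  rw [natCast_zmod2]
  by_cases h : Even n
  · rw [if_pos h]
    simp [Nat.not_odd_iff_even.mpr h]
  · rw [if_neg h]
    simp [Nat.not_even_iff_odd.mp h]

lemma mem_odd_symmDiff (G : SimpleGraph V) (E F : Finset V) (u : V) :
    xor (decide (u ∈ oddNbhd G E)) (decide (u ∈ oddNbhd G F))
      = decide (u ∈ oddNbhd G (E ∆ F)) := by
  have h := dG_symmDiff G u E F
  have key : u ∈ oddNbhd G (E ∆ F) ↔ ¬ (u ∈ oddNbhd G E ↔ u ∈ oddNbhd G F) := by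
    rw [mem_oddNbhd, mem_oddNbhd, mem_oddNbhd, odd_iff_cast, odd_iff_cast, odd_iff_cast, h]
    generalize (dG G u E : ZMod 2) = a
    generalize (dG G u F : ZMod 2) = b
    revert a b; decide
  by_cases h1 : u ∈ oddNbhd G E <;> by_cases h2 : u ∈ oddNbhd G F <;>
    simp [h1, h2, key]

lemma PE_mul_exists (G : SimpleGraph V) (E F : Finset V) :
    ∃ c : ℂ, PEm G E * PEm G F = c • PEm G (E ∆ F) := by
  set ε : V → ℂ := fun u =>
    (if (decide (u ∈ oddNbhd G E)) && decide (u ∈ F) then (-1 : ℂ) else 1) with hε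
  have hsite : ∀ u, pmat G E u * pmat G F u = ε u • pmat G (E ∆ F) u := by
    intro u
    rw [pmat, pmat, pmat, site_mul, decide_xor_symmDiff, mem_odd_symmDiff, hε]
  refine ⟨(-1 : ℂ) ^ (edgeCount G E) * (-1) ^ (edgeCount G F) * (-1) ^ (edgeCount G (E ∆ F))
    * ∏ u, ε u, ?_⟩
  rw [PEm, PEm, PEm, Matrix.smul_mul, Matrix.mul_smul, kron_mul, smul_smul]
  rw [show (fun u => pmat G E u * pmat G F u) = fun u => ε u • pmat G (E ∆ F) u
    from funext hsite]
  rw [kron_smul_pi, smul_smul, smul_smul]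
  congr 1
  have hsq : (-1 : ℂ) ^ (edgeCount G (E ∆ F)) * (-1 : ℂ) ^ (edgeCount G (E ∆ F)) = 1 := by
    rw [← pow_add]; exact Even.neg_one_pow ⟨edgeCount G (E ∆ F), rfl⟩
  linear_combination (-(1 : ℂ) * ((-1 : ℂ) ^ (edgeCount G E) * (-1) ^ (edgeCount G F)
    * ∏ u, ε u)) * hsq

lemma PE_empty (G : SimpleGraph V) : PEm G (∅ : Finset V) = 1 := by
  rw [PEm, edgeCount_empty, pow_zero, one_smul]
  have : pmat G (∅ : Finset V) = fun _ => 1 := by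
    funext u
    rw [pmat, oddNbhd_empty]
    simp [site, Xp, Zp]
  rw [this, kron_one]

lemma PE_mul (G : SimpleGraph V) (E F : Finset V) :
    PEm G E * PEm G F = PEm G (E ∆ F) := by
  obtain ⟨c, hc⟩ := PE_mul_exists G E F
  have h1 : (PEm G E * PEm G F).mulVec (graphState G) = graphState G := by
    rw [← Matrix.mulVec_mulVec, PE_mulVec_g, PE_mulVec_g]
  have h2 : (c • PEm G (E ∆ F)).mulVec (graphState G) = c • graphState G := by
    rw [Matrix.smul_mulVec, PE_mulVec_g]
  rw [hc, h2] at h1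
  have hc1 : c = 1 := by
    have hx := congrFun h1 (fun _ => false)
    simp only [Pi.smul_apply, smul_eq_mul] at hx
    have := graphState_ne_zero G (fun _ => false)
    field_simp at hx
    tauto
  rw [hc, hc1, one_smul]

lemma PE_sq (G : SimpleGraph V) (E : Finset V) : PEm G E * PEm G E = 1 := by
  rw [PE_mul, symmDiff_self]
  exact PE_empty G

lemma conj_neg_one_pow (k : ℕ) : (starRingEnd ℂ) ((-1 : ℂ) ^ k) = (-1 : ℂ) ^ k := by
  simp

lemma star_neg_one_pow (k : ℕ) : star ((-1 : ℂ) ^ k) = (-1 : ℂ) ^ k := conj_neg_one_pow k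

lemma PE_unitary (G : SimpleGraph V) (E : Finset V) : (PEm G E)ᴴ * PEm G E = 1 := by
  rw [PEm, Matrix.conjTranspose_smul, kron_conjTranspose]
  rw [Matrix.smul_mul, Matrix.mul_smul, kron_mul, smul_smul]
  have hsite : (fun u => (pmat G E u)ᴴ * pmat G E u) = fun _ => (1 : Matrix (Fin 2) (Fin 2) ℂ) := by
    funext u
    rw [pmat, site_unitary]
  rw [hsite, kron_one, star_neg_one_pow, ← pow_add]
  rw [Even.neg_one_pow ⟨edgeCount G E, rfl⟩, one_smul]

lemma PE_herm (G : SimpleGraph V) (E : Finset V) : (PEm G E)ᴴ = PEm G E := by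
  calc (PEm G E)ᴴ = (PEm G E)ᴴ * (PEm G E * PEm G E) := by rw [PE_sq, mul_one]
  _ = ((PEm G E)ᴴ * PEm G E) * PEm G E := by rw [mul_assoc]
  _ = PEm G E := by rw [PE_unitary, one_mul]

lemma trace_PE (G : SimpleGraph V) (E : Finset V) :
    (PEm G E).trace = if E = ∅ then ((2 : ℂ) ^ Fintype.card V) else 0 := by
  by_cases hE : E = ∅
  · rw [if_pos hE, hE, PE_empty, Matrix.trace_one]
    rw [Fintype.card_fun]
    norm_num
  · rw [if_neg hE, PEm, Matrix.trace_smul, trace_kron]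
    obtain ⟨v, hv⟩ := Finset.nonempty_iff_ne_empty.mpr hE
    have hz : (pmat G E v).trace = 0 := by
      rw [pmat, site_trace, if_pos]
      simpa using hv
    rw [Finset.prod_eq_zero (Finset.mem_univ v) hz, smul_zero]

lemma sqrt_sq_c : ((Real.sqrt (2 ^ Fintype.card V) : ℂ)) * ((Real.sqrt (2 ^ Fintype.card V) : ℂ))
    = (2 : ℂ) ^ Fintype.card V := by
  rw [← Complex.ofReal_mul, Real.mul_self_sqrt (by positivity)]
  push_cast
  ring

lemma g_mul_self (G : SimpleGraph V) (x : V → Bool) :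
    graphState G x * graphState G x = ((2 : ℂ) ^ Fintype.card V)⁻¹ := by
  rw [graphState_apply, div_mul_div_comm, ← pow_add,
    Even.neg_one_pow ⟨edgeCount G (fsx x), rfl⟩, sqrt_sq_c]
  rw [one_div]

lemma two_pow_ne (k : ℕ) : ((2 : ℂ) ^ k) ≠ 0 := pow_ne_zero _ (by norm_num)

lemma g_norm (G : SimpleGraph V) :
    ∑ x : V → Bool, graphState G x * graphState G x = 1 := by
  have : ∀ x : V → Bool, graphState G x * graphState G x = ((2 : ℂ) ^ Fintype.card V)⁻¹ :=
    g_mul_self G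
  rw [Finset.sum_congr rfl (fun x _ => this x), Finset.sum_const]
  rw [Finset.card_univ, Fintype.card_fun]
  simp only [Fintype.card_bool, nsmul_eq_mul]
  push_cast
  rw [mul_inv_cancel₀]
  exact pow_ne_zero _ (by norm_num)

lemma g_real (G : SimpleGraph V) (x : V → Bool) :
    (starRingEnd ℂ) (graphState G x) = graphState G x := by
  rw [graphState_apply, map_div₀, conj_neg_one_pow, Complex.conj_ofReal]

/-- the graph state projector -/
def rhoM (G : SimpleGraph V) : Matrix (V → Bool) (V → Bool) ℂ :=
  Matrix.of fun x y => graphState G x * graphState G y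

lemma trace_zero_of_herm_idem (A : Matrix (V → Bool) (V → Bool) ℂ)
    (hH : Aᴴ = A) (hI : A * A = A) (hT : A.trace = 0) : A = 0 := by
    have h2 : (Aᴴ * A).trace = 0 := by rw [hH, hI, hT]
    have h3 : ∑ j, ∑ i, Complex.normSq (A i j) = 0 := by
      have h4 : (Aᴴ * A).trace = ∑ j, ∑ i, (Complex.normSq (A i j) : ℂ) := by
        rw [Matrix.trace]
        refine Finset.sum_congr rfl fun j _ => ?_
        rw [Matrix.diag, Matrix.mul_apply]
        refine Finset.sum_congr rfl fun i _ => ?_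
        rw [Matrix.conjTranspose_apply]
        exact (Complex.normSq_eq_conj_mul_self (z := A i j)).symm
      rw [h4] at h2
      have h5 := congrArg Complex.re h2
      push_cast at h5
      simpa using h5
    have h6 : ∀ j ∈ Finset.univ, ∀ i ∈ (Finset.univ : Finset (V → Bool)),
        Complex.normSq (A i j) = 0 := by
      intro j _
      have hj : ∑ i, Complex.normSq (A i j) = 0 := by
        have := (Finset.sum_eq_zero_iff_of_nonneg
          (fun j _ => Finset.sum_nonneg (fun i _ => Complex.normSq_nonneg (A i j)))).mp h3
        exact this j (Finset.mem_univ j)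
      intro i _
      exact (Finset.sum_eq_zero_iff_of_nonneg
        (fun i _ => Complex.normSq_nonneg (A i j))).mp hj i (Finset.mem_univ i)
    ext i j
    exact Complex.normSq_eq_zero.mp (h6 j (Finset.mem_univ j) i (Finset.mem_univ i))

lemma sum_PE (G : SimpleGraph V) :
    ∑ E : Finset V, PEm G E = ((2 : ℂ) ^ Fintype.card V) • rhoM G := by
  set n := Fintype.card V
  set g := graphState G with hg
  set Pi : Matrix (V → Bool) (V → Bool) ℂ := ((2 : ℂ) ^ n)⁻¹ • ∑ E : Finset V, PEm G E
    with hPi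
  have hcardF : (Finset.univ : Finset (Finset V)).card = 2 ^ n := by
    rw [Finset.card_univ, Fintype.card_finset]
  -- Pi * PE = Pi
  have hPiPE : ∀ E, Pi * PEm G E = Pi := by
    intro E
    rw [hPi, Matrix.smul_mul, Finset.sum_mul]
    congr 1
    have h1 : ∀ F : Finset V, PEm G F * PEm G E = PEm G (F ∆ E) := fun F => PE_mul G F E
    rw [Finset.sum_congr rfl (fun F _ => h1 F)]
    refine Fintype.sum_equiv ⟨fun F => F ∆ E, fun F => F ∆ E,
      fun F => symmDiff_symmDiff_cancel_right E F, fun F => symmDiff_symmDiff_cancel_right E F⟩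
      _ _ (fun F => rfl)
  have hns : ∀ {M : Type} [AddCommMonoid M] [Module ℂ M] (X : M),
      ((2 : ℂ) ^ n)⁻¹ • ((2 ^ n : ℕ) • X) = X := by
    intro M _ _ X
    rw [← Nat.cast_smul_eq_nsmul ℂ, smul_smul]
    push_cast
    rw [inv_mul_cancel₀ (two_pow_ne n), one_smul]
  -- Pi * Pi = Pi
  have hPi2 : Pi * Pi = Pi := by
    calc Pi * Pi = Pi * (((2 : ℂ) ^ n)⁻¹ • ∑ E : Finset V, PEm G E) := by rw [← hPi]
    _ = ((2 : ℂ) ^ n)⁻¹ • ∑ E : Finset V, Pi * PEm G E := by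
        rw [Matrix.mul_smul, Finset.mul_sum]
    _ = ((2 : ℂ) ^ n)⁻¹ • ((2 ^ n : ℕ) • Pi) := by
        rw [Finset.sum_congr rfl (fun E _ => hPiPE E), Finset.sum_const, hcardF]
    _ = Pi := hns Pi
  -- Pi hermitian
  have hPiH : Piᴴ = Pi := by
    rw [hPi, Matrix.conjTranspose_smul, Matrix.conjTranspose_sum]
    congr 1
    · simp
    · exact Finset.sum_congr rfl fun E _ => PE_herm G E
  -- Pi g = g
  have hPig : Pi.mulVec g = g := by
    rw [hPi, Matrix.smul_mulVec]
    have : (∑ E : Finset V, PEm G E).mulVec g = ∑ E : Finset V, (PEm G E).mulVec g := by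
      funext x
      rw [Matrix.mulVec, dotProduct]
      simp only [Finset.sum_apply, Matrix.sum_apply, Finset.sum_mul]
      rw [Finset.sum_comm]
      rfl
    rw [this, Finset.sum_congr rfl (fun E _ => PE_mulVec_g G E), Finset.sum_const, hcardF]
    exact hns g
  -- rho facts
  have hrr : rhoM G * rhoM G = rhoM G := by
    ext x y
    rw [Matrix.mul_apply]
    simp only [rhoM, Matrix.of_apply]
    calc ∑ z, g x * g z * (g z * g y) = (∑ z, g z * g z) * (g x * g y) := by
          rw [Finset.sum_mul]; refine Finset.sum_congr rfl fun z _ => ?_; ring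
    _ = g x * g y := by rw [g_norm G]; ring
  have hPr : Pi * rhoM G = rhoM G := by
    ext x y
    rw [Matrix.mul_apply]
    simp only [rhoM, Matrix.of_apply]
    calc ∑ z, Pi x z * (g z * g y) = (∑ z, Pi x z * g z) * g y := by
          rw [Finset.sum_mul]; refine Finset.sum_congr rfl fun z _ => ?_; ring
    _ = g x * g y := by rw [show ∑ z, Pi x z * g z = Pi.mulVec g x from rfl, hPig]
  have hrH : (rhoM G)ᴴ = rhoM G := by
    ext x y
    rw [Matrix.conjTranspose_apply]
    simp only [rhoM, Matrix.of_apply]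
    rw [show star (graphState G y * graphState G x)
        = (starRingEnd ℂ) (graphState G y) * (starRingEnd ℂ) (graphState G x) from by
      simp]
    rw [g_real, g_real]
    ring
  have hrP : rhoM G * Pi = rhoM G := by
    calc rhoM G * Pi = ((rhoM G * Pi)ᴴ)ᴴ := by rw [Matrix.conjTranspose_conjTranspose]
    _ = (Piᴴ * (rhoM G)ᴴ)ᴴ := by rw [Matrix.conjTranspose_mul]
    _ = (Pi * rhoM G)ᴴ := by rw [hPiH, hrH]
    _ = rhoM G := by rw [hPr, hrH]
  -- traces
  have hTrPi : Pi.trace = 1 := by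
    rw [hPi, Matrix.trace_smul, Matrix.trace_sum]
    rw [Finset.sum_congr rfl (fun E _ => trace_PE G E)]
    rw [Finset.sum_ite_eq' Finset.univ (∅ : Finset V) (fun _ => (2 : ℂ) ^ n)]
    simp only [Finset.mem_univ, if_true]
    rw [smul_eq_mul, inv_mul_cancel₀ (two_pow_ne n)]
  have hTrR : (rhoM G).trace = 1 := by
    rw [Matrix.trace]
    simp only [Matrix.diag, rhoM, Matrix.of_apply]
    exact g_norm G
  -- Delta
  have hD : Pi - rhoM G = 0 := by
    apply trace_zero_of_herm_idem
    · rw [Matrix.conjTranspose_sub, hPiH, hrH]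
    · rw [Matrix.sub_mul, Matrix.mul_sub, Matrix.mul_sub, hPi2, hPr, hrP, hrr]
      abel
    · rw [Matrix.trace_sub, hTrPi, hTrR]
      ring
  have hPiR : Pi = rhoM G := by
    have := sub_eq_zero.mp hD
    exact this
  calc ∑ E : Finset V, PEm G E = ((2 : ℂ) ^ n) • Pi := by
        rw [hPi, smul_smul, mul_inv_cancel₀ (two_pow_ne n), one_smul]
  _ = ((2 : ℂ) ^ n) • rhoM G := by rw [hPiR]

/-- single-site operator -/
def sgl (u : V) (q : Matrix (Fin 2) (Fin 2) ℂ) : Matrix (V → Bool) (V → Bool) ℂ :=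
  kron (fun v => if v = u then q else 1)

lemma sgl_conjTranspose (u : V) (q : Matrix (Fin 2) (Fin 2) ℂ) :
    (sgl u q)ᴴ = sgl u qᴴ := by
  rw [sgl, sgl, kron_conjTranspose]
  have : (fun v => (if v = u then q else 1)ᴴ)
      = fun v => if v = u then qᴴ else (1 : Matrix (Fin 2) (Fin 2) ℂ) := by
    funext v
    by_cases hv : v = u <;> simp [hv]
  rw [this]

/-- the local Pauli twirl channel at site `u`, with Paulis conjugated by `w` -/
def chan (w : Matrix (Fin 2) (Fin 2) ℂ) (u : V) (N : Matrix (V → Bool) (V → Bool) ℂ) :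
    Matrix (V → Bool) (V → Bool) ℂ :=
  (4 : ℂ)⁻¹ • ∑ a : Bool, ∑ b : Bool,
    (sgl u (wᴴ * site a b * w)) * N * (sgl u (wᴴ * site a b * w))ᴴ

lemma chan_add (w : Matrix (Fin 2) (Fin 2) ℂ) (u : V) (M N : Matrix (V → Bool) (V → Bool) ℂ) :
    chan w u (M + N) = chan w u M + chan w u N := by
  simp only [chan, Matrix.mul_add, Matrix.add_mul, Finset.sum_add_distrib, smul_add]

lemma chan_zero (w : Matrix (Fin 2) (Fin 2) ℂ) (u : V) : chan w u 0 = 0 := by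
  simp [chan]

lemma chan_smul (w : Matrix (Fin 2) (Fin 2) ℂ) (u : V) (c : ℂ)
    (N : Matrix (V → Bool) (V → Bool) ℂ) : chan w u (c • N) = c • chan w u N := by
  simp only [chan, Matrix.mul_smul, Matrix.smul_mul, ← Finset.smul_sum, smul_smul]
  rw [mul_comm]

lemma chan_sum (w : Matrix (Fin 2) (Fin 2) ℂ) (u : V) {ι : Type} (s : Finset ι)
    (f : ι → Matrix (V → Bool) (V → Bool) ℂ) :
    chan w u (∑ i ∈ s, f i) = ∑ i ∈ s, chan w u (f i) :=
  map_sum (AddMonoidHom.mk' (chan w u) (chan_add w u)) f s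

lemma sgl_mul_kron_mul (f : V → Matrix (Fin 2) (Fin 2) ℂ) (u : V)
    (p : Matrix (Fin 2) (Fin 2) ℂ) :
    sgl u p * kron f * (sgl u p)ᴴ = kron (Function.update f u (p * f u * pᴴ)) := by
  rw [sgl_conjTranspose, sgl, sgl, kron_mul, kron_mul]
  have : (fun v => (if v = u then p else 1) * f v * (if v = u then pᴴ else 1))
      = Function.update f u (p * f u * pᴴ) := by
    funext v
    by_cases hv : v = u
    · subst hv; simp
    · simp [hv, Function.update, hv]
  rw [this]

lemma chan_kron (w : Matrix (Fin 2) (Fin 2) ℂ) (hw : w ∈ Matrix.unitaryGroup (Fin 2) ℂ)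
    (u : V) (c : ℂ) (f : V → Matrix (Fin 2) (Fin 2) ℂ) :
    chan w u (c • kron f)
      = (c * ((f u).trace / 2)) • kron (Function.update f u 1) := by
  rw [chan_smul, chan]
  have hterm : ∀ a b : Bool,
      (sgl u (wᴴ * site a b * w)) * kron f * (sgl u (wᴴ * site a b * w))ᴴ
        = kron (Function.update f u ((wᴴ * site a b * w) * f u * (wᴴ * site a b * w)ᴴ)) :=
    fun a b => sgl_mul_kron_mul f u _
  simp only [hterm]
  have φ := AddMonoidHom.mk' (fun m => kron (Function.update f u m)) (kron_update_add f u)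
  have hφ : ∀ (s : Finset Bool) (h : Bool → Matrix (Fin 2) (Fin 2) ℂ),
      ∑ b ∈ s, kron (Function.update f u (h b)) = kron (Function.update f u (∑ b ∈ s, h b)) := by
    intro s h
    exact (map_sum (AddMonoidHom.mk' (fun m => kron (Function.update f u m))
      (kron_update_add f u)) h s).symm
  rw [Finset.sum_congr rfl (fun a _ => hφ Finset.univ
    (fun b => (wᴴ * site a b * w) * f u * (wᴴ * site a b * w)ᴴ)), hφ]
  rw [site_twirl_conj w hw (f u)]
  rw [kron_update_smul, smul_smul, smul_smul]
  congr 1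
  field_simp
  ring

lemma sgl_comm_kronU (U : V → Matrix (Fin 2) (Fin 2) ℂ) (hU : IsLocalUnitary U) (u : V)
    (q : Matrix (Fin 2) (Fin 2) ℂ) :
    sgl u q * kron U = kron U * sgl u ((U u)ᴴ * q * (U u)) := by
  have hw1 : U u * (U u)ᴴ = 1 := Matrix.mem_unitaryGroup_iff.mp (hU u)
  rw [sgl, sgl, kron_mul, kron_mul]
  have : (fun v => (if v = u then q else 1) * U v)
      = fun v => U v * (if v = u then (U u)ᴴ * q * (U u) else 1) := by
    funext v
    by_cases hv : v = u
    · subst hv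
      simp [← Matrix.mul_assoc, hw1]
    · simp [hv]
  rw [this]

lemma chan_conj (U : V → Matrix (Fin 2) (Fin 2) ℂ) (hU : IsLocalUnitary U) (u : V)
    (N : Matrix (V → Bool) (V → Bool) ℂ) :
    chan 1 u (kron U * N * (kron U)ᴴ) = kron U * chan (U u) u N * (kron U)ᴴ := by
  rw [chan, chan]
  have hone : ∀ a b : Bool, ((1 : Matrix (Fin 2) (Fin 2) ℂ)ᴴ * site a b * 1) = site a b := by
    intro a b; simp
  have hterm : ∀ a b : Bool,
      (sgl u ((1 : Matrix (Fin 2) (Fin 2) ℂ)ᴴ * site a b * 1)) * (kron U * N * (kron U)ᴴ)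
          * (sgl u ((1 : Matrix (Fin 2) (Fin 2) ℂ)ᴴ * site a b * 1))ᴴ
        = kron U * ((sgl u ((U u)ᴴ * site a b * (U u))) * N
            * (sgl u ((U u)ᴴ * site a b * (U u)))ᴴ) * (kron U)ᴴ := by
    intro a b
    rw [hone]
    have h1 : sgl u (site a b) * kron U = kron U * sgl u ((U u)ᴴ * site a b * (U u)) :=
      sgl_comm_kronU U hU u (site a b)
    have h2 : (kron U)ᴴ * (sgl u (site a b))ᴴ
        = (sgl u ((U u)ᴴ * site a b * (U u)))ᴴ * (kron U)ᴴ := by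
      calc (kron U)ᴴ * (sgl u (site a b))ᴴ = (sgl u (site a b) * kron U)ᴴ := by
            rw [Matrix.conjTranspose_mul]
      _ = (kron U * sgl u ((U u)ᴴ * site a b * (U u)))ᴴ := by rw [h1]
      _ = (sgl u ((U u)ᴴ * site a b * (U u)))ᴴ * (kron U)ᴴ := by
            rw [Matrix.conjTranspose_mul]
    calc sgl u (site a b) * (kron U * N * (kron U)ᴴ) * (sgl u (site a b))ᴴ
        = (sgl u (site a b) * kron U) * N * ((kron U)ᴴ * (sgl u (site a b))ᴴ) := by
          noncomm_ring
    _ = (kron U * sgl u ((U u)ᴴ * site a b * (U u))) * N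
          * ((sgl u ((U u)ᴴ * site a b * (U u)))ᴴ * (kron U)ᴴ) := by rw [h1, h2]
    _ = kron U * ((sgl u ((U u)ᴴ * site a b * (U u))) * N
          * (sgl u ((U u)ᴴ * site a b * (U u)))ᴴ) * (kron U)ᴴ := by noncomm_ring
  simp only [hterm]
  rw [← Finset.sum_congr rfl (fun a _ => rfl)]  -- no-op
  rw [Matrix.mul_smul, Matrix.smul_mul]
  congr 1
  rw [Finset.mul_sum, Finset.sum_mul]
  refine Finset.sum_congr rfl fun a _ => ?_
  rw [Finset.mul_sum, Finset.sum_mul]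

/-- iterated twirl over a list of sites -/
def TwL : List V → Matrix (V → Bool) (V → Bool) ℂ → Matrix (V → Bool) (V → Bool) ℂ
  | [], N => N
  | u :: l, N => chan 1 u (TwL l N)

lemma TwL_zero (l : List V) : TwL l (0 : Matrix (V → Bool) (V → Bool) ℂ) = 0 := by
  induction l with
  | nil => rfl
  | cons u l ih => rw [TwL, ih, chan_zero]

lemma TwL_sum (l : List V) {ι : Type} (s : Finset ι)
    (f : ι → Matrix (V → Bool) (V → Bool) ℂ) :
    TwL l (∑ i ∈ s, f i) = ∑ i ∈ s, TwL l (f i) := by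
  induction l with
  | nil => rfl
  | cons u l ih => simp only [TwL]; rw [ih, chan_sum]

lemma pmat_one_of_not_mem (G : SimpleGraph V) (E : Finset V) (u : V)
    (h : u ∉ E ∪ oddNbhd G E) : pmat G E u = 1 := by
  rw [Finset.mem_union] at h
  push_neg at h
  rw [pmat]
  rw [decide_eq_false h.1, decide_eq_false h.2]
  simp [site, Xp, Zp]

lemma pmat_trace_zero (G : SimpleGraph V) (E : Finset V) (u : V)
    (h : u ∈ E ∪ oddNbhd G E) : (pmat G E u).trace = 0 := by
  rw [pmat, site_trace]
  rw [Finset.mem_union] at h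
  by_cases h1 : u ∈ E
  · rw [if_pos (by simpa using h1)]
  · rw [if_neg (by simpa using h1), if_pos (by simp [h.resolve_left h1])]

lemma trace_one_2 : (1 : Matrix (Fin 2) (Fin 2) ℂ).trace = 2 := by
  simp [Matrix.trace_one]

lemma TwL_PE (G : SimpleGraph V) (E : Finset V) (l : List V) :
    TwL l (PEm G E)
      = if ∀ u ∈ l, u ∉ E ∪ oddNbhd G E then PEm G E else 0 := by
  induction l with
  | nil => simp [TwL]
  | cons u l ih =>
    rw [TwL, ih]
    by_cases hcond : ∀ v ∈ l, v ∉ E ∪ oddNbhd G E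
    · rw [if_pos hcond]
      by_cases hu : u ∈ E ∪ oddNbhd G E
      · rw [PEm, chan_kron 1 (one_mem _) u _ (pmat G E), pmat_trace_zero G E u hu]
        rw [if_neg (by push_neg; exact ⟨u, List.mem_cons_self, hu⟩)]
        norm_num
      · rw [PEm, chan_kron 1 (one_mem _) u _ (pmat G E)]
        have hp : pmat G E u = 1 := pmat_one_of_not_mem G E u hu
        rw [hp, trace_one_2]
        rw [if_pos (by
          intro v hv
          rcases List.mem_cons.mp hv with rfl | hv'
          · exact hu
          · exact hcond v hv')]
        rw [show Function.update (pmat G E) u 1 = pmat G E from by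
          rw [← hp]; exact Function.update_eq_self u (pmat G E)]
        norm_num
    · rw [if_neg hcond, chan_zero]
      rw [if_neg (by
        intro hc
        exact hcond (fun v hv => hc v (List.mem_cons_of_mem u hv)))]

lemma TwL_conj_PE (U : V → Matrix (Fin 2) (Fin 2) ℂ) (hU : IsLocalUnitary U)
    (G : SimpleGraph V) (E : Finset V) (l : List V) :
    TwL l (kron U * PEm G E * (kron U)ᴴ)
      = if ∀ u ∈ l, u ∉ E ∪ oddNbhd G E then kron U * PEm G E * (kron U)ᴴ else 0 := by
  induction l with
  | nil => simp [TwL]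
  | cons u l ih =>
    rw [TwL, ih]
    by_cases hcond : ∀ v ∈ l, v ∉ E ∪ oddNbhd G E
    · rw [if_pos hcond, chan_conj U hU u]
      by_cases hu : u ∈ E ∪ oddNbhd G E
      · rw [PEm, chan_kron (U u) (hU u) u _ (pmat G E), pmat_trace_zero G E u hu]
        rw [if_neg (by push_neg; exact ⟨u, List.mem_cons_self, hu⟩)]
        norm_num
      · rw [PEm, chan_kron (U u) (hU u) u _ (pmat G E)]
        have hp : pmat G E u = 1 := pmat_one_of_not_mem G E u hu
        rw [hp, trace_one_2]
        rw [if_pos (by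
          intro v hv
          rcases List.mem_cons.mp hv with rfl | hv'
          · exact hu
          · exact hcond v hv')]
        rw [show Function.update (pmat G E) u 1 = pmat G E from by
          rw [← hp]; exact Function.update_eq_self u (pmat G E)]
        norm_num
    · rw [if_neg hcond, chan_zero]
      rw [if_neg (by
        intro hc
        exact hcond (fun v hv => hc v (List.mem_cons_of_mem u hv)))]

lemma kron_unitary (U : V → Matrix (Fin 2) (Fin 2) ℂ) (hU : IsLocalUnitary U) :
    kron U * (kron U)ᴴ = 1 ∧ (kron U)ᴴ * kron U = 1 := by
  constructor
  · rw [kron_conjTranspose, kron_mul]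
    rw [show (fun u => U u * (U u)ᴴ) = fun _ => (1 : Matrix (Fin 2) (Fin 2) ℂ) from
      funext fun u => Matrix.mem_unitaryGroup_iff.mp (hU u)]
    exact kron_one
  · rw [kron_conjTranspose, kron_mul]
    rw [show (fun u => (U u)ᴴ * U u) = fun _ => (1 : Matrix (Fin 2) (Fin 2) ℂ) from
      funext fun u => Matrix.mem_unitaryGroup_iff'.mp (hU u)]
    exact kron_one

end

theorem stmt_7 {V : Type} [Fintype V] [DecidableEq V] (G G' : SimpleGraph V)
    (U : V → Matrix (Fin 2) (Fin 2) ℂ) (hU : IsLocalUnitary U)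
    (h : graphState G = applyLocal U (graphState G'))
    (L D D' : Finset V)
    (hL : IsMLS G L) (hD : L = D ∪ oddNbhd G D)
    (hDu : ∀ E : Finset V, L = E ∪ oddNbhd G E → E = D)
    (hL' : IsMLS G' L) (hD' : L = D' ∪ oddNbhd G' D')
    (hD'u : ∀ E : Finset V, L = E ∪ oddNbhd G' E → E = D') :
    ∀ ψ : (V → Bool) → ℂ, pauliP G D (applyLocal U ψ) = applyLocal U (pauliP G' D' ψ) := by
  classical
  intro ψ
  -- matrix form of the local unitary
  set M := kron U with hM
  obtain ⟨hMu1, hMu2⟩ := kron_unitary U hU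
  have hg : graphState G = M.mulVec (graphState G') := by
    rw [h, applyLocal_eq]
  -- transfer of the projector
  have hrho : rhoM G = M * rhoM G' * (kron U)ᴴ := by
    ext x y
    have hxy : ∀ z, graphState G z = M.mulVec (graphState G') z := fun z => by rw [hg]
    have hstar : ∀ z : ℂ, star z = (starRingEnd ℂ) z := fun _ => rfl
    rw [Matrix.mul_apply]
    refine Eq.symm ?_
    have h1 : ∀ w, (M * rhoM G') x w = M.mulVec (graphState G') x * graphState G' w := by
      intro w
      rw [Matrix.mul_apply]
      simp only [rhoM, Matrix.of_apply]
      rw [Matrix.mulVec, dotProduct, Finset.sum_mul]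
      exact Finset.sum_congr rfl fun z _ => by ring
    calc ∑ w, (M * rhoM G') x w * (kron U)ᴴ w y
        = ∑ w, M.mulVec (graphState G') x * (graphState G' w * (starRingEnd ℂ) (M y w)) := by
          refine Finset.sum_congr rfl fun w _ => ?_
          rw [h1 w, Matrix.conjTranspose_apply, hstar]
          ring
    _ = M.mulVec (graphState G') x
          * (starRingEnd ℂ) (∑ w, M y w * graphState G' w) := by
          rw [map_sum, Finset.mul_sum]
          refine Finset.sum_congr rfl fun w _ => ?_
          rw [RingHom.map_mul]
          rw [g_real G']
          ring
    _ = graphState G x * graphState G y := by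
          rw [show (∑ w, M y w * graphState G' w) = M.mulVec (graphState G') y from rfl]
          rw [← hxy x, ← hxy y, g_real G]
    _ = rhoM G x y := rfl
  have hsum : ∑ E : Finset V, PEm G E = ∑ E : Finset V, M * PEm G' E * (kron U)ᴴ := by
    calc ∑ E : Finset V, PEm G E = ((2:ℂ) ^ Fintype.card V) • rhoM G := sum_PE G
    _ = ((2:ℂ) ^ Fintype.card V) • (M * rhoM G' * (kron U)ᴴ) := by rw [hrho]
    _ = M * (((2:ℂ) ^ Fintype.card V) • rhoM G') * (kron U)ᴴ := by
        rw [Matrix.mul_smul, Matrix.smul_mul]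
    _ = M * (∑ E : Finset V, PEm G' E) * (kron U)ᴴ := by rw [sum_PE G']
    _ = ∑ E : Finset V, M * PEm G' E * (kron U)ᴴ := by
        rw [Finset.mul_sum, Finset.sum_mul]
  -- the twirl list: all vertices outside L
  set l : List V := (Finset.univ \ L).toList with hl
  have hmem : ∀ u : V, u ∈ l ↔ u ∉ L := by
    intro u
    rw [hl, Finset.mem_toList, Finset.mem_sdiff]
    simp
  have hcond : ∀ S : Finset V, (∀ u ∈ l, u ∉ S) ↔ S ⊆ L := by
    intro S
    constructor
    · intro hl' v hv
      by_contra hvL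
      exact hl' v ((hmem v).mpr hvL) hv
    · intro hsub u hu hneg
      exact ((hmem u).mp hu) (hsub hneg)
  -- enumeration of generators inside L
  have hLne : L.Nonempty := hL.1.1
  have hDne : D ≠ ∅ := by
    intro hc
    rw [hc, oddNbhd_empty, Finset.empty_union] at hD
    rw [hD] at hLne
    exact Finset.not_nonempty_empty hLne
  have hD'ne : D' ≠ ∅ := by
    intro hc
    rw [hc, oddNbhd_empty, Finset.empty_union] at hD'
    rw [hD'] at hLne
    exact Finset.not_nonempty_empty hLne
  have henum : ∀ E : Finset V, (E ∪ oddNbhd G E ⊆ L) ↔ (E = ∅ ∨ E = D) := by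
    intro E
    constructor
    · intro hsub
      by_cases hE : E = ∅
      · exact Or.inl hE
      · right
        obtain ⟨v, hv⟩ := Finset.nonempty_iff_ne_empty.mpr hE
        have hls : IsLocalSet G (E ∪ oddNbhd G E) :=
          ⟨⟨v, Finset.mem_union_left _ hv⟩, E, rfl⟩
        have := hL.2 _ hls hsub
        exact hDu E this.symm
    · rintro (rfl | rfl)
      · rw [oddNbhd_empty, Finset.empty_union]
        exact Finset.empty_subset L
      · rw [← hD]
  have henum' : ∀ E : Finset V, (E ∪ oddNbhd G' E ⊆ L) ↔ (E = ∅ ∨ E = D') := by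
    intro E
    constructor
    · intro hsub
      by_cases hE : E = ∅
      · exact Or.inl hE
      · right
        obtain ⟨v, hv⟩ := Finset.nonempty_iff_ne_empty.mpr hE
        have hls : IsLocalSet G' (E ∪ oddNbhd G' E) :=
          ⟨⟨v, Finset.mem_union_left _ hv⟩, E, rfl⟩
        have := hL'.2 _ hls hsub
        exact hD'u E this.symm
    · rintro (rfl | rfl)
      · rw [oddNbhd_empty, Finset.empty_union]
        exact Finset.empty_subset L
      · rw [← hD']
  have hpair : ∀ (f : Finset V → Matrix (V → Bool) (V → Bool) ℂ) (Dd : Finset V),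
      Dd ≠ ∅ →
      (∑ E : Finset V, if E = ∅ ∨ E = Dd then f E else 0) = f ∅ + f Dd := by
    intro f Dd hDd
    have hset : ∀ E : Finset V, (E = ∅ ∨ E = Dd) ↔ E ∈ ({∅, Dd} : Finset (Finset V)) := by
      intro E
      simp [Finset.mem_insert, Finset.mem_singleton]
    rw [Finset.sum_congr rfl (fun E _ => by rw [if_congr (hset E) rfl rfl])]
    rw [Finset.sum_ite_mem, Finset.univ_inter]
    exact Finset.sum_pair (Ne.symm hDd)
  -- twirl both sides of hsum
  have htw := congrArg (TwL l) hsum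
  rw [TwL_sum, TwL_sum] at htw
  rw [Finset.sum_congr rfl (fun E _ => TwL_PE G E l)] at htw
  rw [Finset.sum_congr rfl (fun E _ => TwL_conj_PE U hU G' E l)] at htw
  have e1 : ∀ E : Finset V,
      (if ∀ u ∈ l, u ∉ E ∪ oddNbhd G E then PEm G E else 0)
        = (if E = ∅ ∨ E = D then PEm G E else 0) :=
    fun E => if_congr ((hcond (E ∪ oddNbhd G E)).trans (henum E)) rfl rfl
  have e2 : ∀ E : Finset V,
      (if ∀ u ∈ l, u ∉ E ∪ oddNbhd G' E then M * PEm G' E * (kron U)ᴴ else 0)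
        = (if E = ∅ ∨ E = D' then M * PEm G' E * (kron U)ᴴ else 0) :=
    fun E => if_congr ((hcond (E ∪ oddNbhd G' E)).trans (henum' E)) rfl rfl
  rw [Finset.sum_congr rfl (fun E _ => e1 E)] at htw
  rw [Finset.sum_congr rfl (fun E _ => e2 E)] at htw
  rw [hpair (fun E => PEm G E) D hDne,
    hpair (fun E => M * PEm G' E * (kron U)ᴴ) D' hD'ne] at htw
  rw [PE_empty, PE_empty, Matrix.mul_one, hMu1] at htw
  have hkey : PEm G D = M * PEm G' D' * (kron U)ᴴ := add_left_cancel htw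
  have hfinal : PEm G D * M = M * PEm G' D' := by
    calc PEm G D * M = (M * PEm G' D' * (kron U)ᴴ) * M := by rw [hkey]
    _ = M * PEm G' D' * ((kron U)ᴴ * M) := by rw [Matrix.mul_assoc]
    _ = M * PEm G' D' := by rw [hMu2, Matrix.mul_one]
  rw [pauliP_eq, pauliP_eq, applyLocal_eq, applyLocal_eq, Matrix.mulVec_mulVec,
    Matrix.mulVec_mulVec, hfinal]
end
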